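/- Let G be an unmixed chordal graph on the vertex set [n], and let F_1,...,F_m be the facets of the clique complex Δ(G) which admit a free vertex. Then [n] is the disjoint union of F_1,...,F_m. -/

import Mathlib

set_option maxHeartbeats 1000000
set_option synthInstance.maxHeartbeats 400000

open MvPolynomial

/-- A simple graph is chordal if every cycle of length > 3 has a chord, i.e. an edge of the
graph joining two vertices of the cycle which is not an edge of the cycle. -/
def SimpleGraph.IsChordal {V : Type*} (G : SimpleGraph V) : Prop :=
  ∀ (v : V) (c : G.Walk v v), c.IsCycle → 3 < c.length →
    ∃ u w, u ∈ c.support ∧ w ∈ c.support ∧ G.Adj u w ∧ s(u, w) ∉ c.edges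

/-- `F` is a facet of the clique complex `Δ(G)`, i.e. a maximal clique of `G`. -/
def SimpleGraph.IsFacet {V : Type*} (G : SimpleGraph V) (F : Finset V) : Prop :=
  G.IsClique (F : Set V) ∧ ∀ F' : Finset V, G.IsClique (F' : Set V) → F ⊆ F' → F' = F

/-- `v` is a free vertex of the facet `F` of `Δ(G)`: it belongs to no other facet. -/
def SimpleGraph.IsFreeVertex {V : Type*} (G : SimpleGraph V) (F : Finset V) (v : V) : Prop :=
  v ∈ F ∧ ∀ F' : Finset V, G.IsFacet F' → v ∈ F' → F' = F

/-- `F` is a facet of `Δ(G)` admitting a free vertex. -/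
def SimpleGraph.IsFreeFacet {V : Type*} (G : SimpleGraph V) (F : Finset V) : Prop :=
  G.IsFacet F ∧ ∃ v, G.IsFreeVertex F v

/-- A vertex cover of `G`: a set of vertices meeting every edge. -/
def SimpleGraph.IsVertexCover' {V : Type*} (G : SimpleGraph V) (C : Finset V) : Prop :=
  ∀ u w, G.Adj u w → u ∈ C ∨ w ∈ C

/-- A minimal vertex cover of `G`: no proper subset is a vertex cover. -/
def SimpleGraph.IsMinVertexCover {V : Type*} (G : SimpleGraph V) (C : Finset V) : Prop :=
  G.IsVertexCover' C ∧ ∀ C' ⊆ C, G.IsVertexCover' C' → C' = C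

/-- `G` is unmixed: all minimal vertex covers of `G` have the same cardinality. -/
def SimpleGraph.Unmixed {V : Type*} (G : SimpleGraph V) : Prop :=
  ∀ C C' : Finset V, G.IsMinVertexCover C → G.IsMinVertexCover C' → C.card = C'.card

open scoped Classical

namespace ChordalAux

variable {n : ℕ} (G : SimpleGraph (Fin n))

/-- Neighbors of `v` inside `A`. -/
noncomputable def NA (A : Finset (Fin n)) (v : Fin n) : Finset (Fin n) :=
  A.filter (fun x => G.Adj v x)

def CliqueF (K : Finset (Fin n)) : Prop :=
  ∀ x ∈ K, ∀ y ∈ K, x ≠ y → G.Adj x y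

/-- closed neighborhood of `v` inside `A`. -/
noncomputable def splx (A : Finset (Fin n)) (v : Fin n) : Finset (Fin n) :=
  insert v (NA G A v)

def SimpIn (A : Finset (Fin n)) (v : Fin n) : Prop :=
  v ∈ A ∧ CliqueF G (NA G A v)

def IndepIn (A S : Finset (Fin n)) : Prop :=
  S ⊆ A ∧ ∀ x ∈ S, ∀ y ∈ S, ¬ G.Adj x y

def MaxIn (A S : Finset (Fin n)) : Prop :=
  IndepIn G A S ∧ ∀ x ∈ A, x ∉ S → ∃ y ∈ S, G.Adj x y

def WC (A : Finset (Fin n)) : Prop :=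
  ∀ S T, MaxIn G A S → MaxIn G A T → S.card = T.card

variable {G}

lemma mem_NA {A : Finset (Fin n)} {v x : Fin n} :
    x ∈ NA G A v ↔ x ∈ A ∧ G.Adj v x := by
  simp [NA]

lemma NA_subset {A : Finset (Fin n)} {v : Fin n} : NA G A v ⊆ A :=
  Finset.filter_subset _ _

lemma cliqueF_subset {K K' : Finset (Fin n)} (h : K ⊆ K') (hK' : CliqueF G K') :
    CliqueF G K := fun x hx y hy hne => hK' x (h hx) y (h hy) hne

lemma mem_splx_self {A : Finset (Fin n)} {v : Fin n} : v ∈ splx G A v :=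
  Finset.mem_insert_self _ _

lemma splx_subset {A : Finset (Fin n)} {v : Fin n} (hv : v ∈ A) : splx G A v ⊆ A := by
  intro x hx
  rcases Finset.mem_insert.1 hx with rfl | hx
  · exact hv
  · exact NA_subset hx

lemma mem_splx {A : Finset (Fin n)} {v x : Fin n} :
    x ∈ splx G A v ↔ x = v ∨ (x ∈ A ∧ G.Adj v x) := by
  simp [splx, mem_NA]

lemma splx_clique {A : Finset (Fin n)} {v : Fin n} (hv : SimpIn G A v) :
    CliqueF G (splx G A v) := by
  intro x hx y hy hne
  rcases Finset.mem_insert.1 hx with rfl | hx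
  · rcases Finset.mem_insert.1 hy with rfl | hy
    · exact absurd rfl hne
    · exact (mem_NA.1 hy).2
  · rcases Finset.mem_insert.1 hy with rfl | hy
    · exact (mem_NA.1 hx).2.symm
    · exact hv.2 x hx y hy hne

lemma extend_aux : ∀ (k : ℕ) (A S : Finset (Fin n)), A.card - S.card ≤ k →
    IndepIn G A S → ∃ T, S ⊆ T ∧ MaxIn G A T := by
  intro k
  induction k with
  | zero =>
    intro A S hcard hS
    have hsub : S ⊆ A := hS.1
    have : A = S := by
      have h2 := Finset.card_le_card hsub
      exact (Finset.eq_of_subset_of_card_le hsub (by omega)).symm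
    refine ⟨S, subset_rfl, hS, ?_⟩
    intro x hx hxS
    exact absurd (this ▸ hx) hxS
  | succ k ih =>
    intro A S hcard hS
    by_cases hm : ∀ x ∈ A, x ∉ S → ∃ y ∈ S, G.Adj x y
    · exact ⟨S, subset_rfl, hS, hm⟩
    · push_neg at hm
      obtain ⟨x, hxA, hxS, hx⟩ := hm
      have hS' : IndepIn G A (insert x S) := by
        refine ⟨Finset.insert_subset hxA hS.1, ?_⟩
        intro a ha b hb
        rcases Finset.mem_insert.1 ha with h1 | h1
        · rcases Finset.mem_insert.1 hb with h2 | h2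
          · subst h1; subst h2; exact G.irrefl
          · subst h1; exact hx b h2
        · rcases Finset.mem_insert.1 hb with h2 | h2
          · subst h2; exact fun h => hx a h1 h.symm
          · exact hS.2 a h1 b h2
      have hcard' : A.card - (insert x S).card ≤ k := by
        rw [Finset.card_insert_of_notMem hxS]
        omega
      obtain ⟨T, hST, hT⟩ := ih A (insert x S) hcard' hS'
      exact ⟨T, (Finset.subset_insert _ _).trans hST, hT⟩

lemma extend_to_max {A S : Finset (Fin n)} (h : IndepIn G A S) :
    ∃ T, S ⊆ T ∧ MaxIn G A T :=
  extend_aux A.card A S (by omega) h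

lemma max_meets_splx {A T : Finset (Fin n)} {v : Fin n}
    (hT : MaxIn G A T) (hv : SimpIn G A v) : ∃ w ∈ T, w ∈ splx G A v := by
  by_cases hvT : v ∈ T
  · exact ⟨v, hvT, mem_splx_self⟩
  · obtain ⟨y, hyT, hy⟩ := hT.2 v hv.1 hvT
    exact ⟨y, hyT, Finset.mem_insert_of_mem (mem_NA.2 ⟨hT.1.1 hyT, hy⟩)⟩

lemma max_meets_splx_unique {A T : Finset (Fin n)} {v : Fin n}
    (hT : MaxIn G A T) (hv : SimpIn G A v) {w w' : Fin n}
    (hw : w ∈ T) (hw1 : w ∈ splx G A v) (hw' : w' ∈ T) (hw1' : w' ∈ splx G A v) :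
    w = w' := by
  by_contra hne
  exact hT.1.2 w hw w' hw' (splx_clique hv w hw1 w' hw1' hne)

lemma adj_splx_subset {A : Finset (Fin n)} {v w : Fin n}
    (hv : SimpIn G A v) (hw : SimpIn G A w) (hadj : G.Adj v w) :
    splx G A v ⊆ splx G A w := by
  intro x hx
  rcases mem_splx.1 hx with rfl | ⟨hxA, hvx⟩
  · exact mem_splx.2 (Or.inr ⟨hv.1, hadj.symm⟩)
  · by_cases hxw : x = w
    · exact hxw ▸ mem_splx_self
    · have hwNA : w ∈ NA G A v := mem_NA.2 ⟨hw.1, hadj⟩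
      have hxNA : x ∈ NA G A v := mem_NA.2 ⟨hxA, hvx⟩
      exact mem_splx.2 (Or.inr ⟨hxA, (hv.2 x hxNA w hwNA hxw).symm⟩)

lemma adj_splx_eq {A : Finset (Fin n)} {v w : Fin n}
    (hv : SimpIn G A v) (hw : SimpIn G A w) (hadj : G.Adj v w) :
    splx G A v = splx G A w :=
  Finset.Subset.antisymm (adj_splx_subset hv hw hadj) (adj_splx_subset hw hv hadj.symm)

/-- Two distinct simplices of a well-covered graph are disjoint. -/
lemma disj_splx {A : Finset (Fin n)} {v w : Fin n} (hwc : WC G A)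
    (hv : SimpIn G A v) (hw : SimpIn G A w) (hne : splx G A v ≠ splx G A w)
    {z : Fin n} (hzv : z ∈ splx G A v) (hzw : z ∈ splx G A w) : False := by
  have hvw_nadj : ¬ G.Adj v w := fun h => hne (adj_splx_eq hv hw h)
  have hvw_ne : v ≠ w := by
    rintro rfl; exact hne rfl
  have hzv' : z ≠ v → G.Adj v z := by
    intro h
    rcases mem_splx.1 hzv with rfl | ⟨_, h'⟩
    · exact absurd rfl h
    · exact h'
  have hzw' : z ≠ w → G.Adj w z := by
    intro h
    rcases mem_splx.1 hzw with rfl | ⟨_, h'⟩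
    · exact absurd rfl h
    · exact h'
  have hznv : z ≠ v := by
    rintro rfl
    exact hvw_nadj (hzw' hvw_ne).symm
  have hznw : z ≠ w := by
    rintro rfl
    exact hvw_nadj (hzv' hvw_ne.symm)
  have hvz : G.Adj v z := hzv' hznv
  have hwz : G.Adj w z := hzw' hznw
  have hzA : z ∈ A := splx_subset hv.1 hzv
  obtain ⟨T, hzT, hT⟩ := extend_to_max (S := {z})
    ⟨Finset.singleton_subset_iff.2 hzA, by
      intro a ha b hb
      rcases Finset.mem_singleton.1 ha with rfl
      rcases Finset.mem_singleton.1 hb with rfl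
      exact G.irrefl⟩
  have hzT : z ∈ T := hzT (Finset.mem_singleton_self z)
  have hvT : v ∉ T := fun h => hT.1.2 v h z hzT hvz
  have hwT : w ∉ T := fun h => hT.1.2 w h z hzT hwz
  -- new independent set
  set T' : Finset (Fin n) := insert v (insert w (T.erase z)) with hT'def
  have hvnadj : ∀ x ∈ T.erase z, ¬ G.Adj v x := by
    intro x hx hadj
    have hxT := Finset.mem_of_mem_erase hx
    have hxz : x ≠ z := Finset.ne_of_mem_erase hx
    have hxNA : x ∈ NA G A v := mem_NA.2 ⟨hT.1.1 hxT, hadj⟩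
    have hzNA : z ∈ NA G A v := mem_NA.2 ⟨hzA, hvz⟩
    exact hT.1.2 x hxT z hzT (hv.2 x hxNA z hzNA hxz)
  have hwnadj : ∀ x ∈ T.erase z, ¬ G.Adj w x := by
    intro x hx hadj
    have hxT := Finset.mem_of_mem_erase hx
    have hxz : x ≠ z := Finset.ne_of_mem_erase hx
    have hxNA : x ∈ NA G A w := mem_NA.2 ⟨hT.1.1 hxT, hadj⟩
    have hzNA : z ∈ NA G A w := mem_NA.2 ⟨hzA, hwz⟩
    exact hT.1.2 x hxT z hzT (hw.2 x hxNA z hzNA hxz)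
  have hT'indep : IndepIn G A T' := by
    constructor
    · intro x hx
      rcases Finset.mem_insert.1 hx with h1 | h1
      · subst h1; exact hv.1
      rcases Finset.mem_insert.1 h1 with h2 | h2
      · subst h2; exact hw.1
      · exact hT.1.1 (Finset.mem_of_mem_erase h2)
    · intro a ha b hb
      rcases Finset.mem_insert.1 ha with h1 | h1
      · subst h1
        rcases Finset.mem_insert.1 hb with h2 | h2
        · subst h2; exact G.irrefl
        rcases Finset.mem_insert.1 h2 with h3 | h3
        · subst h3; exact hvw_nadj
        · exact hvnadj b h3
      rcases Finset.mem_insert.1 h1 with h2 | h2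
      · subst h2
        rcases Finset.mem_insert.1 hb with h3 | h3
        · subst h3; exact fun h => hvw_nadj h.symm
        rcases Finset.mem_insert.1 h3 with h4 | h4
        · subst h4; exact G.irrefl
        · exact hwnadj b h4
      · rcases Finset.mem_insert.1 hb with h3 | h3
        · subst h3; exact fun h => hvnadj a h2 h.symm
        rcases Finset.mem_insert.1 h3 with h4 | h4
        · subst h4; exact fun h => hwnadj a h2 h.symm
        · exact hT.1.2 a (Finset.mem_of_mem_erase h2) b (Finset.mem_of_mem_erase h4)
  have hcardT' : T'.card = T.card + 1 := by
    have hw1 : w ∉ T.erase z := fun h => hwT (Finset.mem_of_mem_erase h)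
    have hv1 : v ∉ insert w (T.erase z) := by
      intro h
      rcases Finset.mem_insert.1 h with rfl | h
      · exact hvw_ne rfl
      · exact hvT (Finset.mem_of_mem_erase h)
    rw [hT'def, Finset.card_insert_of_notMem hv1, Finset.card_insert_of_notMem hw1,
      Finset.card_erase_of_mem hzT]
    have : 1 ≤ T.card := Finset.card_pos.2 ⟨z, hzT⟩
    omega
  obtain ⟨T'', hT'sub, hT''⟩ := extend_to_max hT'indep
  have h1 : T''.card = T.card := hwc T'' T hT'' hT
  have h2 : T'.card ≤ T''.card := Finset.card_le_card hT'sub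
  omega


open SimpleGraph



lemma len0_eq {x y : Fin n} (q : G.Walk x y) (h : q.length = 0) : x = y := by
  cases q with
  | nil => rfl
  | cons h' q' => simp [Walk.length_cons] at h

lemma adj_of_len1 {x y : Fin n} (q : G.Walk x y) (h : q.length = 1) : G.Adj x y := by
  cases q with
  | nil => simp at h
  | cons h' q' =>
    have h0 : q'.length = 0 := by simpa using h
    exact (len0_eq q' h0) ▸ h'

/-- A minimal-length walk among those with support in `W` has all its chords as edges. -/
lemma min_walk_chordless {W : Finset (Fin n)} :
    ∀ {s t : Fin n} (p : G.Walk s t), (∀ x ∈ p.support, x ∈ W) →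
    (∀ q : G.Walk s t, (∀ x ∈ q.support, x ∈ W) → p.length ≤ q.length) →
    ∀ u w, u ∈ p.support → w ∈ p.support → G.Adj u w → s(u, w) ∈ p.edges := by
  intro s t p
  induction p with
  | nil =>
    intro _ _ u w hu hw huw
    simp only [Walk.support_nil, List.mem_singleton] at hu hw
    subst hu; subst hw
    exact absurd huw G.irrefl
  | @cons s s₁ t h p ih =>
    intro hW hmin u w hu hw huw
    have hsW : s ∈ W := hW s (Walk.start_mem_support _)
    have hpW : ∀ x ∈ p.support, x ∈ W := fun x hx => hW x (by simp [Walk.support_cons, hx])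
    have hpmin : ∀ q : G.Walk s₁ t, (∀ x ∈ q.support, x ∈ W) → p.length ≤ q.length := by
      intro q hq
      have := hmin (Walk.cons h q) (by
        intro x hx
        rcases List.mem_cons.1 (by simpa [Walk.support_cons] using hx) with h1 | h1
        · exact h1 ▸ hsW
        · exact hq x h1)
      simpa [Walk.length_cons] using this
    -- helper for the case u = s, w in p.support
    have key : ∀ w', w' ∈ p.support → G.Adj s w' → s(s, w') ∈ (Walk.cons h p).edges := by
      intro w' hw' hsw'
      have hdrop := Walk.support_dropUntil_subset p hw'
      have hq : ∀ x ∈ (Walk.cons hsw' (p.dropUntil w' hw')).support, x ∈ W := by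
        intro x hx
        rcases List.mem_cons.1 (by simpa [Walk.support_cons] using hx) with h1 | h1
        · exact h1 ▸ hsW
        · exact hpW x (hdrop h1)
      have hlen := hmin _ hq
      have hspec := Walk.take_spec p hw'
      have hlen2 : (p.takeUntil w' hw').length + (p.dropUntil w' hw').length = p.length := by
        conv_rhs => rw [← hspec]
        rw [Walk.length_append]
      simp only [Walk.length_cons] at hlen
      have htake0 : (p.takeUntil w' hw').length = 0 := by omega
      have : s₁ = w' := len0_eq _ htake0
      subst this
      simp [Walk.edges_cons]
    rcases List.mem_cons.1 (by simpa [Walk.support_cons] using hu) with h1 | h1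
    · -- u = s
      subst h1
      rcases List.mem_cons.1 (by simpa [Walk.support_cons] using hw) with h2 | h2
      · subst h2; exact absurd huw G.irrefl
      · exact key w h2 huw
    · rcases List.mem_cons.1 (by simpa [Walk.support_cons] using hw) with h2 | h2
      · -- w = s
        subst h2
        have := key u h1 huw.symm
        rwa [Sym2.eq_swap] at this
      · have := ih hpW hpmin u w h1 h2 huw
        simp [Walk.edges_cons, this]

/-- From a minimal family member, extract a minimal *path*. -/
lemma exists_min_path {s t : Fin n} {W : Finset (Fin n)}
    (p0 : G.Walk s t) (hp0 : ∀ x ∈ p0.support, x ∈ W) :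
    ∃ p : G.Walk s t, p.IsPath ∧ (∀ x ∈ p.support, x ∈ W) ∧
      ∀ q : G.Walk s t, (∀ x ∈ q.support, x ∈ W) → p.length ≤ q.length := by
  have hne : ∃ l : ℕ, ∃ p : G.Walk s t, (∀ x ∈ p.support, x ∈ W) ∧ p.length = l :=
    ⟨p0.length, p0, hp0, rfl⟩
  obtain ⟨p, hpW, hplen⟩ := Nat.find_spec hne
  have hmin : ∀ q : G.Walk s t, (∀ x ∈ q.support, x ∈ W) → Nat.find hne ≤ q.length :=
    fun q hq => Nat.find_min' hne ⟨q, hq, rfl⟩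
  refine ⟨p.bypass, Walk.bypass_isPath p, ?_, ?_⟩
  · exact fun x hx => hpW x (Walk.support_bypass_subset p hx)
  · intro q hq
    calc p.bypass.length ≤ p.length := Walk.length_bypass_le p
      _ = Nat.find hne := hplen
      _ ≤ q.length := hmin q hq

/-- Key workhorse: there cannot be two vertex-disjoint non-adjacent "paths" between
nonadjacent `s,t` through mutually nonadjacent sets `C` and `D`, in a chordal graph. -/
lemma no_double_path {s t : Fin n} (hch : G.IsChordal) (hst : ¬ G.Adj s t) (hsnet : s ≠ t)
    {C D : Finset (Fin n)}
    (hsC : s ∉ C) (htC : t ∉ C) (hsD : s ∉ D) (htD : t ∉ D)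
    (hCD : ∀ c ∈ C, ∀ d ∈ D, ¬ G.Adj c d)
    (hdisj : ∀ x, x ∈ C → x ∈ D → False)
    (p0 : G.Walk s t) (hp0 : ∀ x ∈ p0.support, x ∈ insert s (insert t C))
    (q0 : G.Walk s t) (hq0 : ∀ x ∈ q0.support, x ∈ insert s (insert t D)) : False := by
  obtain ⟨p, hpP, hpW, hpmin⟩ := exists_min_path p0 hp0
  obtain ⟨q, hqP, hqW, hqmin⟩ := exists_min_path q0 hq0
  have hplen2 : 2 ≤ p.length := by
    rcases Nat.lt_or_ge p.length 2 with h | h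
    · interval_cases hpl : p.length
      · exact absurd (len0_eq p hpl) hsnet
      · exact absurd (adj_of_len1 p hpl) hst
    · exact h
  have hqlen2 : 2 ≤ q.length := by
    rcases Nat.lt_or_ge q.length 2 with h | h
    · interval_cases hql : q.length
      · exact absurd (len0_eq q hql) hsnet
      · exact absurd (adj_of_len1 q hql) hst
    · exact h
  -- membership helpers
  have hpC : ∀ x ∈ p.support, x ≠ s → x ≠ t → x ∈ C := by
    intro x hx hxs hxt
    have := hpW x hx
    rcases Finset.mem_insert.1 this with h1 | h1
    · exact absurd h1 hxs
    rcases Finset.mem_insert.1 h1 with h2 | h2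
    · exact absurd h2 hxt
    · exact h2
  have hqD : ∀ x ∈ q.support, x ≠ s → x ≠ t → x ∈ D := by
    intro x hx hxs hxt
    have := hqW x hx
    rcases Finset.mem_insert.1 this with h1 | h1
    · exact absurd h1 hxs
    rcases Finset.mem_insert.1 h1 with h2 | h2
    · exact absurd h2 hxt
    · exact h2
  have hsupp_inter : ∀ x, x ∈ p.support → x ∈ q.support → x = s ∨ x = t := by
    intro x hxp hxq
    by_cases hxs : x = s
    · exact Or.inl hxs
    by_cases hxt : x = t
    · exact Or.inr hxt
    exact absurd (hdisj x (hpC x hxp hxs hxt) (hqD x hxq hxs hxt)) id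
  set o : G.Walk s s := p.append q.reverse with ho
  have hoedges : o.edges = p.edges ++ q.reverse.edges := Walk.edges_append _ _
  have hosupp : o.support = p.support ++ q.reverse.support.tail := Walk.support_append _ _
  have hqrev_supp : ∀ x, x ∈ q.reverse.support ↔ x ∈ q.support := by
    intro x; rw [Walk.support_reverse]; exact List.mem_reverse
  -- edge disjointness
  have hedge_disj : ∀ e, e ∈ p.edges → e ∈ q.edges → False := by
    intro e hep heq
    induction e with
    | h x y =>
      have hxp := Walk.fst_mem_support_of_mem_edges p hep
      have hyp := Walk.snd_mem_support_of_mem_edges p hep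
      have hxq := Walk.fst_mem_support_of_mem_edges q heq
      have hyq := Walk.snd_mem_support_of_mem_edges q heq
      have hadj : G.Adj x y := Walk.adj_of_mem_edges p hep
      rcases hsupp_inter x hxp hxq with rfl | rfl
      · rcases hsupp_inter y hyp hyq with rfl | rfl
        · exact G.irrefl hadj
        · exact hst hadj
      · rcases hsupp_inter y hyp hyq with rfl | rfl
        · exact hst hadj.symm
        · exact G.irrefl hadj
  have hotrail : o.IsTrail := by
    constructor
    rw [hoedges]
    refine List.Nodup.append hpP.isTrail.edges_nodup hqP.reverse.isTrail.edges_nodup ?_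
    intro e hep heq
    rw [Walk.edges_reverse, List.mem_reverse] at heq
    exact hedge_disj e hep heq
  have honil : o ≠ Walk.nil := by
    intro hnil
    have : o.length = 0 := by rw [hnil]; rfl
    rw [ho, Walk.length_append, Walk.length_reverse] at this
    omega
  have hocycle : o.IsCycle := by
    refine ⟨⟨hotrail, honil⟩, ?_⟩
    -- support tail nodup
    have h1 : p.support = s :: p.support.tail := Walk.support_eq_cons p
    have htail : o.support.tail = p.support.tail ++ q.reverse.support.tail := by
      rw [hosupp]
      conv_lhs => rw [h1]
      simp
    rw [htail]
    have hnd1 : p.support.tail.Nodup := by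
      have := hpP.support_nodup
      rw [h1] at this
      exact (List.nodup_cons.1 this).2
    have h2 : q.reverse.support = t :: q.reverse.support.tail := Walk.support_eq_cons q.reverse
    have hnd2 : q.reverse.support.tail.Nodup := by
      have := hqP.reverse.support_nodup
      rw [h2] at this
      exact (List.nodup_cons.1 this).2
    refine List.Nodup.append hnd1 hnd2 ?_
    intro x hx1 hx2
    have hxp : x ∈ p.support := List.mem_of_mem_tail hx1
    have hxq : x ∈ q.support := (hqrev_supp x).1 (List.mem_of_mem_tail hx2)
    rcases hsupp_inter x hxp hxq with rfl | rfl
    · have := hpP.support_nodup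
      rw [h1] at this
      exact (List.nodup_cons.1 this).1 hx1
    · have := hqP.reverse.support_nodup
      rw [h2] at this
      exact (List.nodup_cons.1 this).1 hx2
  have holen : 3 < o.length := by
    rw [ho, Walk.length_append, Walk.length_reverse]
    omega
  obtain ⟨u, w, hu, hw, huw, hne⟩ := hch s o hocycle holen
  have hmemo : ∀ x, x ∈ o.support → x ∈ p.support ∨ x ∈ q.support := by
    intro x hx
    rw [hosupp] at hx
    rcases List.mem_append.1 hx with h1 | h1
    · exact Or.inl h1
    · exact Or.inr ((hqrev_supp x).1 (List.mem_of_mem_tail h1))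
  have hbothp : u ∈ p.support → w ∈ p.support → False := by
    intro hup hwp
    exact hne (by
      rw [hoedges]
      exact List.mem_append.2 (Or.inl (min_walk_chordless p hpW hpmin u w hup hwp huw)))
  have hbothq : u ∈ q.support → w ∈ q.support → False := by
    intro huq hwq
    refine hne ?_
    rw [hoedges]
    refine List.mem_append.2 (Or.inr ?_)
    rw [Walk.edges_reverse, List.mem_reverse]
    exact min_walk_chordless q hqW hqmin u w huq hwq huw
  by_cases hup : u ∈ p.support
  · by_cases hwp : w ∈ p.support
    · exact hbothp hup hwp
    · have hwq : w ∈ q.support := (hmemo w hw).resolve_left hwp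
      by_cases huq : u ∈ q.support
      · exact hbothq huq hwq
      · have hus : u ≠ s := by rintro rfl; exact huq (Walk.start_mem_support q)
        have hut : u ≠ t := by rintro rfl; exact huq (Walk.end_mem_support q)
        have hws : w ≠ s := by rintro rfl; exact hwp (Walk.start_mem_support p)
        have hwt : w ≠ t := by rintro rfl; exact hwp (Walk.end_mem_support p)
        exact hCD u (hpC u hup hus hut) w (hqD w hwq hws hwt) huw
  · have huq : u ∈ q.support := (hmemo u hu).resolve_left hup
    by_cases hwq : w ∈ q.support
    · exact hbothq huq hwq
    · have hwp : w ∈ p.support := (hmemo w hw).resolve_right hwq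
      have hus : u ≠ s := by rintro rfl; exact hup (Walk.start_mem_support p)
      have hut : u ≠ t := by rintro rfl; exact hup (Walk.end_mem_support p)
      have hws : w ≠ s := by rintro rfl; exact hwq (Walk.start_mem_support q)
      have hwt : w ≠ t := by rintro rfl; exact hwq (Walk.end_mem_support q)
      exact hCD w (hpC w hwp hws hwt) u (hqD u huq hus hut) huw.symm

/-- The four-cycle chord lemma. -/
lemma four_chord (hch : G.IsChordal) {a b c d : Fin n}
    (hab : G.Adj a b) (hbc : G.Adj b c) (hcd : G.Adj c d) (hda : G.Adj d a)
    (hac : a ≠ c) (hbd : b ≠ d) : G.Adj a c ∨ G.Adj b d := by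
  by_contra hcon
  push_neg at hcon
  obtain ⟨hnac, hnbd⟩ := hcon
  refine no_double_path hch hnac hac (C := {b}) (D := {d})
    (by simp [hab.ne]) (by simp [hbc.ne']) (by simp [(hda.ne').symm, hda.ne'])
    (by simp [hcd.ne]) ?_ ?_
    (Walk.cons hab (Walk.cons hbc Walk.nil)) ?_
    (Walk.cons hda.symm (Walk.cons hcd.symm Walk.nil)) ?_
  · intro x hx y hy
    rw [Finset.mem_singleton] at hx hy
    subst hx; subst hy; exact hnbd
  · intro x hx hy
    rw [Finset.mem_singleton] at hx hy
    exact hbd (hx.symm.trans hy)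
  · intro x hx
    simp only [Walk.support_cons, Walk.support_nil, List.mem_cons, List.not_mem_nil, or_false] at hx
    rcases hx with rfl | rfl | rfl
    · exact Finset.mem_insert_self _ _
    · exact Finset.mem_insert_of_mem (Finset.mem_insert_of_mem (Finset.mem_singleton_self _))
    · exact Finset.mem_insert_of_mem (Finset.mem_insert_self _ _)
  · intro x hx
    simp only [Walk.support_cons, Walk.support_nil, List.mem_cons, List.not_mem_nil, or_false] at hx
    rcases hx with rfl | rfl | rfl
    · exact Finset.mem_insert_self _ _
    · exact Finset.mem_insert_of_mem (Finset.mem_insert_of_mem (Finset.mem_singleton_self _))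
    · exact Finset.mem_insert_of_mem (Finset.mem_insert_self _ _)


def Reach (G : SimpleGraph (Fin n)) (X : Finset (Fin n)) (u v : Fin n) : Prop :=
  Relation.ReflTransGen (fun a b => a ∈ X ∧ b ∈ X ∧ G.Adj a b) u v

lemma reach_symm {X : Finset (Fin n)} {u v : Fin n} (h : Reach G X u v) : Reach G X v u :=
  (@Relation.ReflTransGen.stdSymm _ _ ⟨fun _ _ h' => ⟨h'.2.1, h'.1, h'.2.2.symm⟩⟩).symm _ _ h

lemma reach_walk {X : Finset (Fin n)} {u v : Fin n} (h : Reach G X u v) (hu : u ∈ X) :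
    ∃ p : G.Walk u v, ∀ x ∈ p.support, x ∈ X ∧ Reach G X u x := by
  induction h with
  | refl =>
    refine ⟨Walk.nil, ?_⟩
    intro x hx
    simp only [Walk.support_nil, List.mem_singleton] at hx
    subst hx
    exact ⟨hu, Relation.ReflTransGen.refl⟩
  | @tail b c hsteps hstep ih =>
    obtain ⟨p, hp⟩ := ih
    refine ⟨p.concat hstep.2.2, ?_⟩
    intro x hx
    rw [Walk.support_concat] at hx
    rcases List.mem_append.1 hx with h1 | h1
    · exact hp x h1
    · rw [List.mem_singleton] at h1
      subst h1
      exact ⟨hstep.2.1, hsteps.tail hstep⟩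

theorem dirac_strong (hch : G.IsChordal) :
    ∀ (N : ℕ) (A : Finset (Fin n)), A.card ≤ N → A.Nonempty →
      CliqueF G A ∨ ∃ x ∈ A, ∃ y ∈ A, x ≠ y ∧ ¬G.Adj x y ∧ SimpIn G A x ∧ SimpIn G A y := by
  intro N
  induction N with
  | zero =>
    intro A hA hne
    obtain ⟨a, ha⟩ := hne
    have := Finset.card_pos.2 ⟨a, ha⟩
    omega
  | succ N ih =>
  intro A hA hne
  by_cases hcl : CliqueF G A
  · exact Or.inl hcl
  right
  rw [CliqueF] at hcl
  push_neg at hcl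
  obtain ⟨a, haA, b, hbA, hab_ne, hab⟩ := hcl
  -- the set of (a,b)-separators
  set Seps := A.powerset.filter (fun S => a ∉ S ∧ b ∉ S ∧ ¬ Reach G (A \ S) a b) with hSeps
  have hPfull : (A \ {a, b}) ∈ Seps := by
    rw [hSeps, Finset.mem_filter, Finset.mem_powerset]
    refine ⟨Finset.sdiff_subset, by simp, by simp [hab_ne], ?_⟩
    intro hreach
    rcases Relation.ReflTransGen.cases_head hreach with heq | ⟨c, hc, _⟩
    · exact hab_ne heq
    · obtain ⟨h1, h2, h3⟩ := hc
      rcases Finset.mem_sdiff.1 h2 with ⟨hcA, hc2⟩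
      have : c = a ∨ c = b := by
        by_contra hcc
        push_neg at hcc
        exact hc2 (Finset.mem_sdiff.2 ⟨hcA, by simp [hcc.1, hcc.2]⟩)
      rcases this with rfl | rfl
      · exact G.irrefl h3
      · exact hab h3
  obtain ⟨S, hSmem, hSmin⟩ := Finset.exists_min_image Seps Finset.card ⟨_, hPfull⟩
  rw [hSeps, Finset.mem_filter, Finset.mem_powerset] at hSmem
  obtain ⟨hSA, haS, hbS, hsep⟩ := hSmem
  set X := A \ S with hX
  have haX : a ∈ X := Finset.mem_sdiff.2 ⟨haA, haS⟩
  have hbX : b ∈ X := Finset.mem_sdiff.2 ⟨hbA, hbS⟩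
  -- neighbor-in-component lemma via minimality
  have hnbr : ∀ u w : Fin n, ((u = a ∧ w = b) ∨ (u = b ∧ w = a)) → ∀ s₀ ∈ S,
      ∃ c, (c ∈ X ∧ Reach G X u c) ∧ G.Adj s₀ c := by
    intro u w hcase s₀ hs₀
    by_contra hno
    push_neg at hno
    have huX : u ∈ X := by rcases hcase with ⟨rfl, _⟩ | ⟨rfl, _⟩ <;> assumption
    have hinv : ∀ x, Reach G (A \ (S.erase s₀)) u x → x ∈ X ∧ Reach G X u x := by
      intro x hx
      induction hx with
      | refl => exact ⟨huX, Relation.ReflTransGen.refl⟩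
      | @tail x' y hsteps hstep ihh =>
        obtain ⟨hx'm, hym, hadj⟩ := hstep
        by_cases hys : y = s₀
        · subst hys
          exact absurd hadj.symm (hno x' ihh)
        · have hyX : y ∈ X := by
            rcases Finset.mem_sdiff.1 hym with ⟨hyA, hyS'⟩
            exact Finset.mem_sdiff.2 ⟨hyA, fun hyS => hyS' (Finset.mem_erase.2 ⟨hys, hyS⟩)⟩
          exact ⟨hyX, ihh.2.tail ⟨ihh.1, hyX, hadj⟩⟩
    have hsep' : ¬ Reach G (A \ (S.erase s₀)) a b := by
      intro hr
      rcases hcase with ⟨hu, hw⟩ | ⟨hu, hw⟩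
      · subst hu; subst hw; exact hsep (hinv w hr).2
      · subst hu; subst hw; exact hsep (reach_symm (hinv w (reach_symm hr)).2)
    have hS'mem : S.erase s₀ ∈ Seps := by
      rw [hSeps, Finset.mem_filter, Finset.mem_powerset]
      exact ⟨(Finset.erase_subset _ _).trans hSA,
        fun h => haS (Finset.mem_of_mem_erase h),
        fun h => hbS (Finset.mem_of_mem_erase h), hsep'⟩
    have h1 := hSmin _ hS'mem
    rw [Finset.card_erase_of_mem hs₀] at h1
    have h2 : 0 < S.card := Finset.card_pos.2 ⟨s₀, hs₀⟩
    omega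
  -- S is a clique
  have hSclq : ∀ s₁ ∈ S, ∀ s₂ ∈ S, s₁ ≠ s₂ → G.Adj s₁ s₂ := by
    intro s₁ hs₁ s₂ hs₂ hne12
    by_contra hnadj
    obtain ⟨c₁, hc₁, hadj1⟩ := hnbr a b (Or.inl ⟨rfl, rfl⟩) s₁ hs₁
    obtain ⟨c₂, hc₂, hadj2⟩ := hnbr a b (Or.inl ⟨rfl, rfl⟩) s₂ hs₂
    obtain ⟨d₁, hd₁, hadjd1⟩ := hnbr b a (Or.inr ⟨rfl, rfl⟩) s₁ hs₁
    obtain ⟨d₂, hd₂, hadjd2⟩ := hnbr b a (Or.inr ⟨rfl, rfl⟩) s₂ hs₂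
    set Ca := X.filter (fun x => Reach G X a x) with hCa
    set Cb := X.filter (fun x => Reach G X b x) with hCb
    have hCaX : Ca ⊆ X := Finset.filter_subset _ _
    have hCbX : Cb ⊆ X := Finset.filter_subset _ _
    have hCa_mem : ∀ {x}, x ∈ Ca ↔ x ∈ X ∧ Reach G X a x := by
      intro x; rw [hCa, Finset.mem_filter]
    have hCb_mem : ∀ {x}, x ∈ Cb ↔ x ∈ X ∧ Reach G X b x := by
      intro x; rw [hCb, Finset.mem_filter]
    have hdisjab : ∀ x, x ∈ Ca → x ∈ Cb → False := by
      intro x hx1 hx2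
      exact hsep ((hCa_mem.1 hx1).2.trans (reach_symm (hCb_mem.1 hx2).2))
    have hCDnadj : ∀ c ∈ Ca, ∀ d ∈ Cb, ¬ G.Adj c d := by
      intro c hc d hd hadj
      have hdCa : d ∈ Ca := hCa_mem.2 ⟨hCbX hd, (hCa_mem.1 hc).2.tail ⟨hCaX hc, hCbX hd, hadj⟩⟩
      exact hdisjab d hdCa hd
    have hs₁X : s₁ ∉ X := fun h => (Finset.mem_sdiff.1 h).2 hs₁
    have hs₂X : s₂ ∉ X := fun h => (Finset.mem_sdiff.1 h).2 hs₂
    -- walk through Ca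
    obtain ⟨wlk, hwlk⟩ := reach_walk ((reach_symm hc₁.2).trans hc₂.2) hc₁.1
    have hwlksupp : ∀ x ∈ wlk.support, x ∈ Ca := fun x hx =>
      hCa_mem.2 ⟨(hwlk x hx).1, hc₁.2.trans (hwlk x hx).2⟩
    obtain ⟨wlk', hwlk'⟩ := reach_walk ((reach_symm hd₁.2).trans hd₂.2) hd₁.1
    have hwlksupp' : ∀ x ∈ wlk'.support, x ∈ Cb := fun x hx =>
      hCb_mem.2 ⟨(hwlk' x hx).1, hd₁.2.trans (hwlk' x hx).2⟩
    refine no_double_path hch hnadj hne12 (C := Ca) (D := Cb)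
      (fun h => hs₁X (hCaX h)) (fun h => hs₂X (hCaX h))
      (fun h => hs₁X (hCbX h)) (fun h => hs₂X (hCbX h))
      hCDnadj hdisjab
      (Walk.cons hadj1 (wlk.concat hadj2.symm)) ?_
      (Walk.cons hadjd1 (wlk'.concat hadjd2.symm)) ?_
    · intro x hx
      rw [Walk.support_cons] at hx
      rcases List.mem_cons.1 hx with h1 | h1
      · subst h1; exact Finset.mem_insert_self _ _
      · rw [Walk.support_concat] at h1
        rcases List.mem_append.1 h1 with h2 | h2
        · exact Finset.mem_insert_of_mem (Finset.mem_insert_of_mem (hwlksupp x h2))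
        · rw [List.mem_singleton] at h2
          subst h2; exact Finset.mem_insert_of_mem (Finset.mem_insert_self _ _)
    · intro x hx
      rw [Walk.support_cons] at hx
      rcases List.mem_cons.1 hx with h1 | h1
      · subst h1; exact Finset.mem_insert_self _ _
      · rw [Walk.support_concat] at h1
        rcases List.mem_append.1 h1 with h2 | h2
        · exact Finset.mem_insert_of_mem (Finset.mem_insert_of_mem (hwlksupp' x h2))
        · rw [List.mem_singleton] at h2
          subst h2; exact Finset.mem_insert_of_mem (Finset.mem_insert_self _ _)
  -- a simplicial vertex on each side
  have hside : ∀ u w : Fin n, ((u = a ∧ w = b) ∨ (u = b ∧ w = a)) →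
      ∃ x, (x ∈ X ∧ Reach G X u x) ∧ SimpIn G A x := by
    intro u w hcase
    have huX : u ∈ X := by rcases hcase with ⟨rfl, _⟩ | ⟨rfl, _⟩ <;> assumption
    have hwX : w ∈ X := by rcases hcase with ⟨_, rfl⟩ | ⟨_, rfl⟩ <;> assumption
    have hwA : w ∈ A := (Finset.mem_sdiff.1 hwX).1
    have hnru : ¬ Reach G X u w := by
      rcases hcase with ⟨rfl, rfl⟩ | ⟨rfl, rfl⟩
      · exact hsep
      · exact fun h => hsep (reach_symm h)
    set Cu := X.filter (fun x => Reach G X u x) with hCu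
    have hCu_mem : ∀ {x}, x ∈ Cu ↔ x ∈ X ∧ Reach G X u x := by
      intro x; rw [hCu, Finset.mem_filter]
    have hCuX : Cu ⊆ X := Finset.filter_subset _ _
    have hCu_closed : ∀ x ∈ Cu, ∀ y, y ∈ X → G.Adj x y → y ∈ Cu := by
      intro x hx y hy hadj
      exact hCu_mem.2 ⟨hy, (hCu_mem.1 hx).2.tail ⟨hCuX hx, hy, hadj⟩⟩
    have hwCu : w ∉ Cu := fun h => hnru (hCu_mem.1 h).2
    set A₁ := Cu ∪ S with hA₁
    have hA₁A : A₁ ⊆ A := by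
      intro x hx
      rcases Finset.mem_union.1 hx with h1 | h1
      · exact (Finset.mem_sdiff.1 (hCuX h1)).1
      · exact hSA h1
    have hwA₁ : w ∉ A₁ := by
      intro h
      rcases Finset.mem_union.1 h with h1 | h1
      · exact hwCu h1
      · exact (Finset.mem_sdiff.1 hwX).2 h1
    have hA₁card : A₁.card ≤ N := by
      have hss : A₁ ⊂ A := ⟨hA₁A, fun h => hwA₁ (h hwA)⟩
      have := Finset.card_lt_card hss
      omega
    have huCu : u ∈ Cu := hCu_mem.2 ⟨huX, Relation.ReflTransGen.refl⟩
    have hNAsub : ∀ x ∈ Cu, NA G A x ⊆ A₁ := by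
      intro x hx y hy
      obtain ⟨hyA, hadj⟩ := mem_NA.1 hy
      by_cases hyS : y ∈ S
      · exact Finset.mem_union_right _ hyS
      · have hyX : y ∈ X := Finset.mem_sdiff.2 ⟨hyA, hyS⟩
        exact Finset.mem_union_left _ (hCu_closed x hx y hyX hadj)
    rcases ih A₁ hA₁card ⟨u, Finset.mem_union_left _ huCu⟩ with hclq |
      ⟨v₁, hv₁, v₂, hv₂, hne12, hnadj12, hsp₁, hsp₂⟩
    · refine ⟨u, ⟨huX, Relation.ReflTransGen.refl⟩, (Finset.mem_sdiff.1 huX).1, ?_⟩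
      exact cliqueF_subset (hNAsub u huCu) hclq
    · have hgetx : ∃ x, x ∈ Cu ∧ SimpIn G A₁ x := by
        by_cases h1 : v₁ ∈ S
        · by_cases h2 : v₂ ∈ S
          · exact absurd (hSclq v₁ h1 v₂ h2 hne12) hnadj12
          · exact ⟨v₂, (Finset.mem_union.1 hv₂).resolve_right h2, hsp₂⟩
        · exact ⟨v₁, (Finset.mem_union.1 hv₁).resolve_right h1, hsp₁⟩
      obtain ⟨x, hxCu, hxsimp⟩ := hgetx
      have hNAeq : NA G A x = NA G A₁ x := by
        ext y
        simp only [mem_NA]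
        constructor
        · rintro ⟨hyA, hadj⟩
          exact ⟨hNAsub x hxCu (mem_NA.2 ⟨hyA, hadj⟩), hadj⟩
        · rintro ⟨hyA₁, hadj⟩
          exact ⟨hA₁A hyA₁, hadj⟩
      refine ⟨x, ⟨hCuX hxCu, (hCu_mem.1 hxCu).2⟩, (Finset.mem_sdiff.1 (hCuX hxCu)).1, ?_⟩
      rw [hNAeq]
      exact hxsimp.2
  obtain ⟨xC, hxC, hxCsimp⟩ := hside a b (Or.inl ⟨rfl, rfl⟩)
  obtain ⟨xD, hxD, hxDsimp⟩ := hside b a (Or.inr ⟨rfl, rfl⟩)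
  have hnexy : xC ≠ xD := by
    rintro rfl
    exact hsep (hxC.2.trans (reach_symm hxD.2))
  have hnadjxy : ¬ G.Adj xC xD := by
    intro h
    have : Reach G X a xD := hxC.2.tail ⟨hxC.1, hxD.1, h⟩
    exact hsep (this.trans (reach_symm hxD.2))
  exact ⟨xC, (Finset.mem_sdiff.1 hxC.1).1, xD, (Finset.mem_sdiff.1 hxD.1).1,
    hnexy, hnadjxy, hxCsimp, hxDsimp⟩

lemma dirac (hch : G.IsChordal) {A : Finset (Fin n)} (hA : A.Nonempty) : ∃ v, SimpIn G A v := by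
  rcases dirac_strong hch A.card A le_rfl hA with hclq | ⟨x, hx, _, _, _, _, hs, _⟩
  · obtain ⟨a, ha⟩ := hA
    exact ⟨a, ha, cliqueF_subset NA_subset hclq⟩
  · exact ⟨x, hs⟩


/-- The covering theorem: in a chordal, well-covered graph, every vertex lies in the
closed neighborhood of some simplicial vertex. -/
theorem cover (hch : G.IsChordal) :
    ∀ (N : ℕ) (A : Finset (Fin n)), A.card ≤ N → WC G A →
      ∀ z ∈ A, ∃ v, SimpIn G A v ∧ z ∈ splx G A v := by
  intro N
  induction N with
  | zero =>
    intro A hA _ z hz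
    have := Finset.card_pos.2 ⟨z, hz⟩
    omega
  | succ N ih =>
  intro A hA hwc z hz
  obtain ⟨v₀, hv₀⟩ := dirac hch (⟨z, hz⟩ : A.Nonempty)
  by_cases hzF : z ∈ splx G A v₀
  · exact ⟨v₀, hv₀, hzF⟩
  set B := NA G A v₀ with hBdef
  set F := splx G A v₀ with hFdef
  set A' := A \ F with hA'def
  have hv₀F : v₀ ∈ F := mem_splx_self
  have hFA : F ⊆ A := splx_subset hv₀.1
  have hzA' : z ∈ A' := Finset.mem_sdiff.2 ⟨hz, hzF⟩
  have hA'A : A' ⊆ A := Finset.sdiff_subset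
  have hA'le : A'.card ≤ N := by
    have hss : A' ⊂ A := ⟨hA'A, fun h => (Finset.mem_sdiff.1 (h hv₀.1)).2 hv₀F⟩
    have := Finset.card_lt_card hss
    omega
  have hv₀A' : ∀ x ∈ A', ¬ G.Adj v₀ x := by
    intro x hx hadj
    exact (Finset.mem_sdiff.1 hx).2
      (Finset.mem_insert_of_mem (mem_NA.2 ⟨(Finset.mem_sdiff.1 hx).1, hadj⟩))
  have hBF : ∀ b ∈ B, b ∈ F := fun b hb => Finset.mem_insert_of_mem hb
  -- extending maximal independent sets of A' to A
  have ext_max : ∀ S', MaxIn G A' S' → MaxIn G A (insert v₀ S') := by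
    intro S' hS'
    constructor
    · constructor
      · exact Finset.insert_subset hv₀.1 (hS'.1.1.trans hA'A)
      · intro x hx y hy
        rcases Finset.mem_insert.1 hx with e1 | hx'
        · subst e1
          rcases Finset.mem_insert.1 hy with e2 | hy'
          · subst e2; exact G.irrefl
          · exact hv₀A' y (hS'.1.1 hy')
        · rcases Finset.mem_insert.1 hy with e2 | hy'
          · subst e2; exact fun h => hv₀A' x (hS'.1.1 hx') h.symm
          · exact hS'.1.2 x hx' y hy'
    · intro x hxA hxns
      by_cases hxF : x ∈ F
      · rcases mem_splx.1 hxF with e | ⟨_, hadj⟩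
        · exact absurd (Finset.mem_insert_self _ _) (e ▸ hxns)
        · exact ⟨v₀, Finset.mem_insert_self _ _, hadj.symm⟩
      · obtain ⟨y, hyS', hadj⟩ := hS'.2 x (Finset.mem_sdiff.2 ⟨hxA, hxF⟩)
          (fun h => hxns (Finset.mem_insert_of_mem h))
        exact ⟨y, Finset.mem_insert_of_mem hyS', hadj⟩
  have hWC' : WC G A' := by
    intro S' T' hS' hT'
    have h1 := hwc _ _ (ext_max S' hS') (ext_max T' hT')
    have hv₀S' : v₀ ∉ S' := fun h => (Finset.mem_sdiff.1 (hS'.1.1 h)).2 hv₀F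
    have hv₀T' : v₀ ∉ T' := fun h => (Finset.mem_sdiff.1 (hT'.1.1 h)).2 hv₀F
    rw [Finset.card_insert_of_notMem hv₀S', Finset.card_insert_of_notMem hv₀T'] at h1
    omega
  -- restricting maximal independent sets of A to A'
  have restrict : ∀ T, MaxIn G A T → ∃ c, (c ∈ T ∧ c ∈ F) ∧ MaxIn G A' (T.erase c) := by
    intro T hT
    obtain ⟨c, hcT, hcF⟩ := max_meets_splx hT hv₀
    have huniq : ∀ x ∈ T, x ∈ F → x = c := fun x hx hxF =>
      max_meets_splx_unique hT hv₀ hx hxF hcT hcF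
    have hTe_sub : T.erase c ⊆ A' := by
      intro x hx
      have hxT := Finset.mem_of_mem_erase hx
      exact Finset.mem_sdiff.2 ⟨hT.1.1 hxT,
        fun hxF => (Finset.ne_of_mem_erase hx) (huniq x hxT hxF)⟩
    have hT₁indep : IndepIn G A (insert v₀ (T.erase c)) := by
      refine ⟨Finset.insert_subset hv₀.1 ((Finset.erase_subset _ _).trans hT.1.1), ?_⟩
      intro x hx y hy
      rcases Finset.mem_insert.1 hx with e1 | hx'
      · subst e1
        rcases Finset.mem_insert.1 hy with e2 | hy'
        · subst e2; exact G.irrefl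
        · exact hv₀A' y (hTe_sub hy')
      · rcases Finset.mem_insert.1 hy with e2 | hy'
        · subst e2; exact fun h => hv₀A' x (hTe_sub hx') h.symm
        · exact hT.1.2 x (Finset.mem_of_mem_erase hx') y (Finset.mem_of_mem_erase hy')
    have hv₀new : v₀ ∉ T.erase c := fun h =>
      (Finset.ne_of_mem_erase h) (huniq v₀ (Finset.mem_of_mem_erase h) hv₀F)
    have hcard₁ : (insert v₀ (T.erase c)).card = T.card := by
      rw [Finset.card_insert_of_notMem hv₀new, Finset.card_erase_of_mem hcT]
      have : 0 < T.card := Finset.card_pos.2 ⟨c, hcT⟩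
      omega
    obtain ⟨T₂, hsub₂, hT₂⟩ := extend_to_max hT₁indep
    have hc2 : T₂.card = T.card := hwc T₂ T hT₂ hT
    have hT₁max : MaxIn G A (insert v₀ (T.erase c)) := by
      have heq : T₂ = insert v₀ (T.erase c) :=
        (Finset.eq_of_subset_of_card_le hsub₂ (by omega)).symm
      rwa [heq] at hT₂
    refine ⟨c, ⟨hcT, hcF⟩, ⟨hTe_sub,
      fun x hx y hy => hT.1.2 x (Finset.mem_of_mem_erase hx) y (Finset.mem_of_mem_erase hy)⟩, ?_⟩
    intro x hxA' hxTe
    have hxnotins : x ∉ insert v₀ (T.erase c) := by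
      intro h
      rcases Finset.mem_insert.1 h with e | h'
      · exact (Finset.mem_sdiff.1 hxA').2 (e ▸ hv₀F)
      · exact hxTe h'
    obtain ⟨y, hy, hadj⟩ := hT₁max.2 x ((Finset.mem_sdiff.1 hxA').1) hxnotins
    rcases Finset.mem_insert.1 hy with e | hy'
    · subst e; exact absurd hadj (fun h => hv₀A' x hxA' h.symm)
    · exact ⟨y, hy', hadj⟩
  -- induction hypothesis inside A'
  obtain ⟨u, hu, hzS⟩ := ih A' hA'le hWC' z hzA'
  set S := splx G A' u with hSdef
  have hSsubA' : S ⊆ A' := splx_subset hu.1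
  have hSclq : CliqueF G S := splx_clique hu
  have huS : u ∈ S := mem_splx_self
  -- every maximal independent set of A meets S
  have meets_S : ∀ T, MaxIn G A T → ∃ w ∈ T, w ∈ S := by
    intro T hT
    obtain ⟨c, ⟨hcT, hcF⟩, hrest⟩ := restrict T hT
    obtain ⟨w, hwTe, hwS⟩ := max_meets_splx hrest hu
    exact ⟨w, Finset.mem_of_mem_erase hwTe, hwS⟩
  set Free := A'.filter (fun y => SimpIn G A' y ∧ splx G A' y = S) with hFreeDef
  have huFree : u ∈ Free := Finset.mem_filter.2 ⟨hu.1, hu, rfl⟩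
  have hFreeS : ∀ y ∈ Free, y ∈ S := by
    intro y hy
    obtain ⟨_, _, heq⟩ := Finset.mem_filter.1 hy
    exact heq ▸ (mem_splx_self : y ∈ splx G A' y)
  by_cases hgood : ∃ u', u' ∈ Free ∧ ∀ b ∈ B, ¬ G.Adj u' b
  · -- the good free vertex is simplicial in A
    obtain ⟨u', hu'Free, hu'B⟩ := hgood
    obtain ⟨hu'A', hu'simp, hu'eq⟩ := Finset.mem_filter.1 hu'Free
    have hNAeq : NA G A u' = NA G A' u' := by
      ext y
      simp only [mem_NA]
      constructor
      · rintro ⟨hyA, hadj⟩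
        refine ⟨Finset.mem_sdiff.2 ⟨hyA, ?_⟩, hadj⟩
        intro hyF
        rcases mem_splx.1 hyF with e | hyB
        · exact hv₀A' u' hu'A' (e ▸ hadj).symm
        · exact hu'B y (mem_NA.2 hyB) hadj
      · rintro ⟨hyA', hadj⟩
        exact ⟨hA'A hyA', hadj⟩
    refine ⟨u', ⟨hA'A hu'A', ?_⟩, ?_⟩
    · rw [hNAeq]; exact hu'simp.2
    · show z ∈ splx G A u'
      rw [splx, hNAeq]
      show z ∈ splx G A' u'
      rw [hu'eq]
      exact hzS
  · -- all free vertices of S have a neighbor in B : contradiction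
    exfalso
    push_neg at hgood
    have hbad : ∀ u' ∈ Free, ∃ b ∈ B, G.Adj u' b := by
      intro u' hu'
      obtain ⟨b, hb, hadj⟩ := hgood u' hu'
      exact ⟨b, hb, hadj⟩
    have hBclq : CliqueF G B := hv₀.2
    -- the crossing property
    have hcross : ∀ u₁ ∈ Free, ∀ u₂ ∈ Free, ∀ b₁ ∈ B, ∀ b₂ ∈ B,
        G.Adj u₁ b₁ → G.Adj u₂ b₂ → ¬G.Adj u₂ b₁ → G.Adj u₁ b₂ := by
      intro u₁ h1 u₂ h2 b₁ hb₁ b₂ hb₂ ha1 ha2 hna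
      by_cases h12 : u₁ = u₂
      · exact absurd (h12 ▸ ha1) hna
      by_cases hb12 : b₁ = b₂
      · exact absurd (hb12 ▸ ha2) hna
      have hu₂u₁ : G.Adj u₂ u₁ :=
        hSclq u₂ (hFreeS u₂ h2) u₁ (hFreeS u₁ h1) (fun h => h12 h.symm)
      have hne_u₁b₂ : u₁ ≠ b₂ := by
        intro h
        exact (Finset.mem_sdiff.1 (hSsubA' (hFreeS u₁ h1))).2 (h ▸ hBF b₂ hb₂)
      have hne_b₁u₂ : b₁ ≠ u₂ := by
        intro h
        exact (Finset.mem_sdiff.1 (hSsubA' (hFreeS u₂ h2))).2 (h ▸ hBF b₁ hb₁)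
      rcases four_chord hch ha1 (hBclq b₁ hb₁ b₂ hb₂ hb12) ha2.symm hu₂u₁
          hne_u₁b₂ hne_b₁u₂ with h | h
      · exact h
      · exact absurd h.symm hna
    -- choose the best b*
    obtain ⟨b0, hb0B, hb0adj⟩ := hbad u huFree
    obtain ⟨bs, hbsB, hbsmax⟩ :=
      Finset.exists_max_image B (fun b => (Free.filter (fun y => G.Adj y b)).card) ⟨b0, hb0B⟩
    have hFreeAdj : ∀ u' ∈ Free, G.Adj u' bs := by
      intro u' hu'
      by_contra hna
      obtain ⟨b', hb'B, hb'adj⟩ := hbad u' hu'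
      have hsub : Free.filter (fun y => G.Adj y bs) ⊆ Free.filter (fun y => G.Adj y b') := by
        intro y hy
        rw [Finset.mem_filter] at hy ⊢
        exact ⟨hy.1, hcross y hy.1 u' hu' bs hbsB b' hb'B hy.2 hb'adj hna⟩
      have hss : Free.filter (fun y => G.Adj y bs) ⊂ Free.filter (fun y => G.Adj y b') :=
        ⟨hsub, fun hrev => hna (Finset.mem_filter.1
          (hrev (Finset.mem_filter.2 ⟨hu', hb'adj⟩))).2⟩
      have := Finset.card_lt_card hss
      have := hbsmax b' hb'B
      omega
    set R := S.filter (fun x => ¬ G.Adj x bs) with hRdef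
    have hRnotFree : ∀ x ∈ R, x ∉ Free := by
      intro x hx hxF
      exact (Finset.mem_filter.1 hx).2 (hFreeAdj x hxF)
    -- every vertex of R has a neighbor outside S
    have Dx : ∀ x ∈ R, ∃ y, y ∈ A' ∧ y ∉ S ∧ G.Adj x y := by
      intro x hx
      obtain ⟨hxS, hxnb⟩ := Finset.mem_filter.1 hx
      have hxA' : x ∈ A' := hSsubA' hxS
      by_cases hsimp : SimpIn G A' x
      · exfalso
        by_cases heq : splx G A' x = S
        · exact hRnotFree x hx (Finset.mem_filter.2 ⟨hxA', hsimp, heq⟩)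
        · exact disj_splx hWC' hsimp hu heq (mem_splx_self) hxS
      · have hnc : ¬ CliqueF G (NA G A' x) := fun h => hsimp ⟨hxA', h⟩
        rw [CliqueF] at hnc
        push_neg at hnc
        obtain ⟨y₁, hy₁, y₂, hy₂, hne12, hnadj12⟩ := hnc
        by_cases h1 : y₁ ∈ S
        · by_cases h2 : y₂ ∈ S
          · exact absurd (hSclq y₁ h1 y₂ h2 hne12) hnadj12
          · exact ⟨y₂, NA_subset hy₂, h2, (mem_NA.1 hy₂).2⟩
        · exact ⟨y₁, NA_subset hy₁, h1, (mem_NA.1 hy₁).2⟩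
    -- neighbors outside S of R-vertices are not adjacent to b*
    have cyc1 : ∀ x ∈ R, ∀ y, y ∈ A' → y ∉ S → G.Adj x y → ¬ G.Adj y bs := by
      intro x hx y hyA' hynS hadj hybs
      obtain ⟨hxS, hxnb⟩ := Finset.mem_filter.1 hx
      have hxu_ne : x ≠ u := fun h => hRnotFree x hx (h ▸ huFree)
      have hadj_ux : G.Adj u x := hSclq u huS x hxS (fun h => hxu_ne h.symm)
      have hne_xbs : x ≠ bs := by
        intro h
        exact (Finset.mem_sdiff.1 (hSsubA' hxS)).2 (h ▸ hBF bs hbsB)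
      have hne_yu : y ≠ u := fun h => hynS (h ▸ huS)
      rcases four_chord hch hadj hybs (hFreeAdj u huFree).symm hadj_ux hne_xbs hne_yu
        with h | h
      · exact hxnb h
      · exact hynS (Finset.mem_insert_of_mem (mem_NA.2 ⟨hyA', h.symm⟩))
    set Dset := A'.filter (fun y => y ∉ S ∧ ∃ x ∈ R, G.Adj x y) with hDsetDef
    -- the swap lemma
    have hswap : ∀ x ∈ R, ∀ x' ∈ R, ∀ y j : Fin n, G.Adj x y → y ∉ S →
        G.Adj y j → G.Adj x' j → j ∉ S → ¬G.Adj x j → G.Adj x' y := by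
      intro x hx x' hx' y j hxy hynS hyj hx'j hjnS hnxj
      have hxS := (Finset.mem_filter.1 hx).1
      have hx'S := (Finset.mem_filter.1 hx').1
      have hxx' : x ≠ x' := fun h => hnxj (h ▸ hx'j)
      have hadj_x'x : G.Adj x' x := hSclq x' hx'S x hxS (fun h => hxx' h.symm)
      have hne_xj : x ≠ j := fun h => hjnS (h ▸ hxS)
      have hne_yx' : y ≠ x' := fun h => hynS (h ▸ hx'S)
      rcases four_chord hch hxy hyj hx'j.symm hadj_x'x hne_xj hne_yx' with h | h
      · exact absurd h hnxj
      · exact h.symm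
    -- construct the independent dominating set J of R inside Dset
    have Jex : ∃ J, J ⊆ Dset ∧ (∀ j₁ ∈ J, ∀ j₂ ∈ J, ¬G.Adj j₁ j₂) ∧
        ∀ x ∈ R, ∃ j ∈ J, G.Adj x j := by
      suffices h : ∀ (k : ℕ) (J : Finset (Fin n)), J ⊆ Dset →
          (∀ j₁ ∈ J, ∀ j₂ ∈ J, ¬G.Adj j₁ j₂) →
          (R.filter (fun x => ¬ ∃ j ∈ J, G.Adj x j)).card ≤ k →
          ∃ J', J' ⊆ Dset ∧ (∀ j₁ ∈ J', ∀ j₂ ∈ J', ¬G.Adj j₁ j₂) ∧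
            ∀ x ∈ R, ∃ j ∈ J', G.Adj x j by
        exact h R.card ∅ (Finset.empty_subset _) (by simp)
          (Finset.card_le_card (Finset.filter_subset _ _))
      intro k
      induction k with
      | zero =>
        intro J hJD hJind hcard
        refine ⟨J, hJD, hJind, ?_⟩
        intro x hx
        by_contra hnc
        have hmem : x ∈ R.filter (fun x => ¬ ∃ j ∈ J, G.Adj x j) :=
          Finset.mem_filter.2 ⟨hx, hnc⟩
        rw [Nat.le_zero, Finset.card_eq_zero] at hcard
        rw [hcard] at hmem
        exact absurd hmem (Finset.notMem_empty x)
      | succ k ihk =>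
        intro J hJD hJind hcard
        by_cases hall : ∀ x ∈ R, ∃ j ∈ J, G.Adj x j
        · exact ⟨J, hJD, hJind, hall⟩
        push_neg at hall
        obtain ⟨x, hxR, hxunc⟩ := hall
        obtain ⟨y, hyA', hynS, hxy⟩ := Dx x hxR
        have hyD : y ∈ Dset := Finset.mem_filter.2 ⟨hyA', hynS, x, hxR, hxy⟩
        set J' := insert y (J.filter (fun j => ¬ G.Adj y j)) with hJ'
        have hJ'D : J' ⊆ Dset :=
          Finset.insert_subset hyD ((Finset.filter_subset _ _).trans hJD)
        have hJ'ind : ∀ j₁ ∈ J', ∀ j₂ ∈ J', ¬G.Adj j₁ j₂ := by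
          intro j₁ h₁ j₂ h₂
          rcases Finset.mem_insert.1 h₁ with e1 | h₁'
          · subst e1
            rcases Finset.mem_insert.1 h₂ with e2 | h₂'
            · subst e2; exact G.irrefl
            · exact (Finset.mem_filter.1 h₂').2
          · rcases Finset.mem_insert.1 h₂ with e2 | h₂'
            · subst e2; exact fun h => (Finset.mem_filter.1 h₁').2 h.symm
            · exact hJind j₁ (Finset.mem_of_mem_filter _ h₁') j₂ (Finset.mem_of_mem_filter _ h₂')
        have hcov : ∀ x' ∈ R, (∃ j ∈ J, G.Adj x' j) → ∃ j ∈ J', G.Adj x' j := by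
          rintro x' hx'R ⟨j, hjJ, hx'j⟩
          by_cases hyj : G.Adj y j
          · have hjD := hJD hjJ
            obtain ⟨hjA', hjnS, -⟩ := Finset.mem_filter.1 hjD
            have : G.Adj x' y :=
              hswap x hxR x' hx'R y j hxy hynS hyj hx'j hjnS (fun h => hxunc j hjJ h)
            exact ⟨y, Finset.mem_insert_self _ _, this⟩
          · exact ⟨j, Finset.mem_insert_of_mem (Finset.mem_filter.2 ⟨hjJ, hyj⟩), hx'j⟩
        have hcard' : (R.filter (fun x' => ¬ ∃ j ∈ J', G.Adj x' j)).card ≤ k := by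
          have hsub2 : R.filter (fun x' => ¬ ∃ j ∈ J', G.Adj x' j) ⊆
              (R.filter (fun x' => ¬ ∃ j ∈ J, G.Adj x' j)).erase x := by
            intro x' hx'
            obtain ⟨hx'R, hx'unc⟩ := Finset.mem_filter.1 hx'
            refine Finset.mem_erase.2 ⟨?_, Finset.mem_filter.2 ⟨hx'R, ?_⟩⟩
            · rintro rfl
              exact hx'unc ⟨y, Finset.mem_insert_self _ _, hxy⟩
            · rintro ⟨j, hjJ, hadjj⟩
              exact hx'unc (hcov x' hx'R ⟨j, hjJ, hadjj⟩)
          have h3 : x ∈ R.filter (fun x' => ¬ ∃ j ∈ J, G.Adj x' j) :=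
            Finset.mem_filter.2 ⟨hxR, by push_neg; exact hxunc⟩
          have h4 := Finset.card_le_card hsub2
          rw [Finset.card_erase_of_mem h3] at h4
          have h5 : 0 < (R.filter (fun x' => ¬ ∃ j ∈ J, G.Adj x' j)).card :=
            Finset.card_pos.2 ⟨x, h3⟩
          omega
        exact ihk J' hJ'D hJ'ind hcard'
    obtain ⟨J, hJD, hJind, hJcov⟩ := Jex
    -- the contradiction
    have hI : IndepIn G A (insert bs J) := by
      constructor
      · intro x hx
        rcases Finset.mem_insert.1 hx with e | hxJ
        · exact e ▸ (NA_subset hbsB)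
        · exact hA'A (Finset.mem_of_mem_filter _ (hJD hxJ))
      · intro x hx y hy
        rcases Finset.mem_insert.1 hx with e1 | hx'
        · subst e1
          rcases Finset.mem_insert.1 hy with e2 | hy'
          · subst e2; exact G.irrefl
          · obtain ⟨hjA', hjnS, xw, hxwR, hxwj⟩ := Finset.mem_filter.1 (hJD hy')
            exact fun h => (cyc1 xw hxwR y hjA' hjnS hxwj) h.symm
        · rcases Finset.mem_insert.1 hy with e2 | hy'
          · subst e2
            obtain ⟨hjA', hjnS, xw, hxwR, hxwj⟩ := Finset.mem_filter.1 (hJD hx')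
            exact fun h => (cyc1 xw hxwR x hjA' hjnS hxwj) h
          · exact hJind x hx' y hy'
    obtain ⟨T, hIT, hT⟩ := extend_to_max hI
    obtain ⟨w, hwT, hwS⟩ := meets_S T hT
    have hbsT : bs ∈ T := hIT (Finset.mem_insert_self _ _)
    have hwbs : ¬ G.Adj w bs := fun h => hT.1.2 w hwT bs hbsT h
    have hwR : w ∈ R := Finset.mem_filter.2 ⟨hwS, hwbs⟩
    obtain ⟨j, hjJ, hwj⟩ := hJcov w hwR
    exact hT.1.2 w hwT j (hIT (Finset.mem_insert_of_mem hjJ)) hwj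

-- Translation between facets with free vertices and simplicial vertices
lemma facet_exists {K : Finset (Fin n)} (hK : G.IsClique (K : Set (Fin n))) :
    ∃ Fc : Finset (Fin n), G.IsFacet Fc ∧ K ⊆ Fc := by
  set P : Finset (Fin n) → Prop :=
    fun F' => G.IsClique ((F' : Finset (Fin n)) : Set (Fin n)) ∧ K ⊆ F' with hP
  obtain ⟨Fc, hFc, hmax⟩ := Finset.exists_max_image
    ((Finset.univ : Finset (Finset (Fin n))).filter P) Finset.card
    ⟨K, Finset.mem_filter.2 ⟨Finset.mem_univ _, hK, subset_rfl⟩⟩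
  rw [Finset.mem_filter] at hFc
  refine ⟨Fc, ⟨hFc.2.1, ?_⟩, hFc.2.2⟩
  intro F' hF' hsub
  have hmem : F' ∈ (Finset.univ : Finset (Finset (Fin n))).filter P :=
    Finset.mem_filter.2 ⟨Finset.mem_univ _, hF', hFc.2.2.trans hsub⟩
  exact (Finset.eq_of_subset_of_card_le hsub (hmax F' hmem)).symm

lemma freefacet_simp {Fc : Finset (Fin n)} (hFF : G.IsFreeFacet Fc) :
    ∃ v, SimpIn G Finset.univ v ∧ splx G Finset.univ v = Fc := by
  obtain ⟨hFac, v, hvF, hvfree⟩ := hFF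
  have hNv : ∀ u, G.Adj v u → u ∈ Fc := by
    intro u hadj
    have hclq : G.IsClique (({v, u} : Finset (Fin n)) : Set (Fin n)) := by
      intro x hx y hy hne
      simp only [Finset.coe_insert, Finset.coe_singleton, Set.mem_insert_iff,
        Set.mem_singleton_iff] at hx hy
      rcases hx with rfl | rfl <;> rcases hy with rfl | rfl
      · exact absurd rfl hne
      · exact hadj
      · exact hadj.symm
      · exact absurd rfl hne
    obtain ⟨F', hF', hsubF'⟩ := facet_exists hclq
    have heq : F' = Fc := hvfree F' hF' (hsubF' (by simp))
    exact heq ▸ hsubF' (by simp)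
  have hsplx : splx G Finset.univ v = Fc := by
    apply Finset.Subset.antisymm
    · intro x hx
      rcases mem_splx.1 hx with e | ⟨_, hadj⟩
      · exact e ▸ hvF
      · exact hNv x hadj
    · intro x hxF
      by_cases hxv : x = v
      · exact hxv ▸ mem_splx_self
      · exact mem_splx.2 (Or.inr ⟨Finset.mem_univ _,
          hFac.1 (Finset.mem_coe.2 hvF) (Finset.mem_coe.2 hxF) (fun h => hxv h.symm)⟩)
  refine ⟨v, ⟨Finset.mem_univ _, ?_⟩, hsplx⟩
  intro x hx y hy hne
  have hxF : x ∈ Fc := hNv x (mem_NA.1 hx).2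
  have hyF : y ∈ Fc := hNv y (mem_NA.1 hy).2
  exact hFac.1 (Finset.mem_coe.2 hxF) (Finset.mem_coe.2 hyF) hne

lemma simp_freefacet {v : Fin n} (hv : SimpIn G Finset.univ v) :
    G.IsFreeFacet (splx G Finset.univ v) := by
  have hclq : G.IsClique ((splx G Finset.univ v : Finset (Fin n)) : Set (Fin n)) := by
    intro x hx y hy hne
    exact splx_clique hv x (Finset.mem_coe.1 hx) y (Finset.mem_coe.1 hy) hne
  have hsub_of_clique : ∀ F' : Finset (Fin n), G.IsClique (F' : Set (Fin n)) → v ∈ F' →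
      F' ⊆ splx G Finset.univ v := by
    intro F' hF' hvF' x hx
    by_cases hxv : x = v
    · exact hxv ▸ mem_splx_self
    · exact mem_splx.2 (Or.inr ⟨Finset.mem_univ _,
        hF' (Finset.mem_coe.2 hvF') (Finset.mem_coe.2 hx) (fun h => hxv h.symm)⟩)
  refine ⟨⟨hclq, ?_⟩, v, mem_splx_self, ?_⟩
  · intro F' hF' hsub
    exact Finset.Subset.antisymm (hsub_of_clique F' hF' (hsub mem_splx_self)) hsub
  · intro F' hFac' hvF'
    have h1 : F' ⊆ splx G Finset.univ v := hsub_of_clique F' hFac'.1 hvF'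
    exact (hFac'.2 _ hclq h1).symm

lemma maxin_compl_cover {T : Finset (Fin n)} (hT : MaxIn G Finset.univ T) :
    G.IsMinVertexCover Tᶜ := by
  constructor
  · intro u w hadj
    by_contra hcc
    push_neg at hcc
    obtain ⟨hu, hw⟩ := hcc
    rw [Finset.mem_compl, not_not] at hu hw
    exact hT.1.2 u hu w hw hadj
  · intro C' hC' hcov
    apply Finset.Subset.antisymm hC'
    intro x hx
    by_contra hxC'
    have hxT : x ∉ T := Finset.mem_compl.1 hx
    obtain ⟨y, hyT, hadj⟩ := hT.2 x (Finset.mem_univ _) hxT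
    rcases hcov x y hadj with h | h
    · exact hxC' h
    · exact Finset.mem_compl.1 (hC' h) hyT

lemma unmixed_WC (hum : G.Unmixed) : WC G Finset.univ := by
  intro S T hS hT
  have h := hum Sᶜ Tᶜ (maxin_compl_cover hS) (maxin_compl_cover hT)
  have h1 : Sᶜ.card = Fintype.card (Fin n) - S.card := Finset.card_compl S
  have h2 : Tᶜ.card = Fintype.card (Fin n) - T.card := Finset.card_compl T
  have h3 : S.card ≤ Fintype.card (Fin n) := Finset.card_le_univ S
  have h4 : T.card ≤ Fintype.card (Fin n) := Finset.card_le_univ T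
  omega

end ChordalAux

/-- If `G` is an unmixed chordal graph on `[n]` and `F_1,…,F_m` are the
facets of `Δ(G)` admitting a free vertex, then `[n]` is the disjoint union of `F_1,…,F_m`. -/
theorem unmixed_chordal_partition {n : ℕ} (G : SimpleGraph (Fin n))
    (hchordal : G.IsChordal) (hiso : ∀ v : Fin n, ∃ w, G.Adj v w)
    (hunmixed : G.Unmixed) {m : ℕ} (F : Fin m → Finset (Fin n))
    (hFfree : ∀ i, G.IsFreeFacet (F i)) (hFinj : Function.Injective F)
    (hFall : ∀ F' : Finset (Fin n), G.IsFreeFacet F' → ∃ i, F' = F i) :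
    (∀ i j, i ≠ j → Disjoint (F i) (F j)) ∧ ∀ v : Fin n, ∃ i, v ∈ F i := by
  have hwc : ChordalAux.WC G Finset.univ := ChordalAux.unmixed_WC hunmixed
  constructor
  · intro i j hij
    obtain ⟨vi, hvi, hveqi⟩ := ChordalAux.freefacet_simp (hFfree i)
    obtain ⟨vj, hvj, hveqj⟩ := ChordalAux.freefacet_simp (hFfree j)
    rw [Finset.disjoint_left]
    intro x hxi hxj
    have hne : ChordalAux.splx G Finset.univ vi ≠ ChordalAux.splx G Finset.univ vj := by
      rw [hveqi, hveqj]
      exact fun h => hij (hFinj h)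
    exact ChordalAux.disj_splx hwc hvi hvj hne
      (by rw [hveqi]; exact hxi) (by rw [hveqj]; exact hxj)
  · intro v
    obtain ⟨u, hu, hvu⟩ := ChordalAux.cover hchordal Finset.univ.card Finset.univ le_rfl hwc
      v (Finset.mem_univ v)
    obtain ⟨i, hi⟩ := hFall _ (ChordalAux.simp_freefacet hu)
    exact ⟨i, by rw [← hi]; exact hvu⟩
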